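/- Let Γ be a countable group and let Γ ↷ (X,μ) be an ergodic p.m.p. action on a standard probability space that is ℤ-cocycle superrigid. Then the action is strongly ergodic. -/

import Mathlib

/-!  Common definitions: wreath products, measured group actions, orbit equivalence,
measure equivalence, measurable splittings, cocycle superrigidity, and cofinitely
equivariant maps.  -/

open MeasureTheory Function Filter Set
open scoped ENNReal

namespace OEW


/-! ### Restricted direct sums and wreath products of groups -/

/-- The restricted direct sum `⊕_V B`: the subgroup of `V → B` consisting of finitely
supported functions (support = coordinates where the value is not `1`). -/
def dsum (V B : Type) [Group B] : Subgroup (V → B) where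
  carrier := {f | (Function.mulSupport f).Finite}
  one_mem' := by
    simp
  mul_mem' := fun {f g} hf hg =>
    Set.Finite.subset (Set.Finite.union hf hg) (Function.mulSupport_mul f g)
  inv_mem' := fun {f} hf => by simpa [Function.mulSupport_inv] using hf

variable {V B Γ : Type}

/-- The shift of a finitely supported function by `γ`. -/
def shiftSubtype [Group B] [Group Γ] [MulAction Γ V] (γ : Γ) (f : dsum V B) : dsum V B :=
  ⟨fun v => (f : V → B) (γ⁻¹ • v), by
    have h : (Function.mulSupport fun v => (f : V → B) (γ⁻¹ • v)) ⊆
        (fun v => γ⁻¹ • v) ⁻¹' Function.mulSupport (f : V → B) := fun v hv => hv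
    exact Set.Finite.subset
      (Set.Finite.preimage ((MulAction.injective (γ⁻¹ : Γ)).injOn) f.2) h⟩

/-- The shift by `γ` as an automorphism of the restricted direct sum. -/
def shiftEquiv [Group B] [Group Γ] [MulAction Γ V] (γ : Γ) : dsum V B ≃* dsum V B where
  toFun := shiftSubtype γ
  invFun := shiftSubtype γ⁻¹
  left_inv f := Subtype.ext (funext fun v => by simp [shiftSubtype])
  right_inv f := Subtype.ext (funext fun v => by simp [shiftSubtype])
  map_mul' f g := rfl

/-- The left shift action of `Γ` on `⊕_V B` as a homomorphism into the automorphism group. -/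
def shiftHom (V B Γ : Type) [Group B] [Group Γ] [MulAction Γ V] :
    Γ →* MulAut (dsum V B) where
  toFun γ := shiftEquiv γ
  map_one' := MulEquiv.ext fun f => Subtype.ext (funext fun v => by
    simp [shiftEquiv, shiftSubtype])
  map_mul' γ₁ γ₂ := MulEquiv.ext fun f => Subtype.ext (funext fun v => by
    simp [shiftEquiv, shiftSubtype, mul_smul]
    rfl)

/-- The (restricted) permutational wreath product `B ≀_V Γ = (⊕_V B) ⋊ Γ`. -/
abbrev pwreath (V B Γ : Type) [Group B] [Group Γ] [MulAction Γ V] : Type :=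
  SemidirectProduct (dsum V B) Γ (shiftHom V B Γ)

/-- The (restricted) regular wreath product `B ≀ Γ = (⊕_Γ B) ⋊ Γ`. -/
abbrev wreath (B Γ : Type) [Group B] [Group Γ] : Type := pwreath Γ B Γ


/-- The shift ("generalized Bernoulli") action on `V → X`. -/
def shiftS [Group Γ] [MulAction Γ V] (γ : Γ) (x : V → X) : V → X :=
  fun v => x (γ⁻¹ • v)

variable {V B C Γ X Y Z : Type}

/-- The wreath product action: given an action `β : B → X → X`, the induced action of the
wreath product `B ≀_V Γ` on `V → X`. -/
def wreathSmul [Group B] [Group Γ] [MulAction Γ V] (β : B → X → X)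
    (g : pwreath V B Γ) (x : V → X) : V → X :=
  fun v => β ((g.left : V → B) v) (x (g.right⁻¹ • v))

/-- The coordinatewise action of the restricted direct sum `⊕_V B` on `V → X`. -/
def dsumSmul [Group B] (β : B → X → X) (b : dsum V B) (x : V → X) : V → X :=
  fun v => β ((b : V → B) v) (x v)

/-! ### Measured group actions, given by explicit action maps -/

/-- `a` is a measure preserving group action of `G` on `(X, μ)`. -/
def IsMpAction {G : Type} [Group G] [MeasurableSpace X] (a : G → X → X) (μ : Measure X) : Prop :=
  (∀ x, a 1 x = x) ∧ (∀ g h x, a (g * h) x = a g (a h x)) ∧ ∀ g, MeasurePreserving (a g) μ μ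

/-- A probability measure preserving (p.m.p.) action. -/
def IsPmpAction {G : Type} [Group G] [MeasurableSpace X] (a : G → X → X) (μ : Measure X) : Prop :=
  IsProbabilityMeasure μ ∧ IsMpAction a μ

/-- The action is (essentially) free. -/
def IsFreeAction {G : Type} [Group G] [MeasurableSpace X] (a : G → X → X) (μ : Measure X) : Prop :=
  ∀ᵐ x ∂μ, ∀ g : G, a g x = x → g = 1

/-- The action is ergodic: every invariant measurable set is null or conull. -/
def IsErgodicAction {G : Type} [Group G] [MeasurableSpace X] (a : G → X → X) (μ : Measure X) :
    Prop :=
  ∀ A : Set X, MeasurableSet A → (∀ g : G, a g ⁻¹' A = A) → μ A = 0 ∨ μ Aᶜ = 0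

/-- The action is totally ergodic: every infinite subgroup acts ergodically. -/
def IsTotallyErgodic {G : Type} [Group G] [MeasurableSpace X] (a : G → X → X) (μ : Measure X) :
    Prop :=
  ∀ H : Subgroup G, (H : Set G).Infinite → IsErgodicAction (fun (h : H) x => a (h : G) x) μ

/-- `φ` is a measure space isomorphism from `(X,μ)` to `(Y,ν)`: a measure preserving
measurable map admitting an a.e. two-sided measurable inverse. -/
def IsMeasureIso [MeasurableSpace X] [MeasurableSpace Y] (μ : Measure X) (ν : Measure Y)
    (φ : X → Y) : Prop :=
  MeasurePreserving φ μ ν ∧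
    ∃ ψ : Y → X, Measurable ψ ∧ (∀ᵐ x ∂μ, ψ (φ x) = x) ∧ (∀ᵐ y ∂ν, φ (ψ y) = y)

/-- `φ` is an orbit equivalence between the actions `a : G → X → X` and `b : H → Y → Y`:
a measure space isomorphism with `φ(G⬝x) = H⬝φ(x)` for a.e. `x`. -/
def IsOrbitEquivalence {G H : Type} [MeasurableSpace X] [MeasurableSpace Y]
    (a : G → X → X) (b : H → Y → Y) (μ : Measure X) (ν : Measure Y) (φ : X → Y) : Prop :=
  IsMeasureIso μ ν φ ∧
    ∀ᵐ x ∂μ, (∀ g : G, ∃ h : H, φ (a g x) = b h (φ x)) ∧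
      (∀ h : H, ∃ g : G, b h (φ x) = φ (a g x))

/-- The two actions are orbit equivalent. -/
def OrbitEquivalentActions {G H : Type} [MeasurableSpace X] [MeasurableSpace Y]
    (a : G → X → X) (b : H → Y → Y) (μ : Measure X) (ν : Measure Y) : Prop :=
  ∃ φ : X → Y, IsOrbitEquivalence a b μ ν φ

/-- `m` is the product, over the index set `ι`, of copies of the probability measure `ν`. -/
def IsProductMeasure {ι : Type} [MeasurableSpace X] (ν : Measure X) (m : Measure (ι → X)) :
    Prop :=
  IsProbabilityMeasure m ∧
    ∀ (s : Finset ι) (A : ι → Set X), (∀ i, MeasurableSet (A i)) →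
      m {x | ∀ i ∈ s, x i ∈ A i} = ∏ i ∈ s, ν (A i)

/-- A group is amenable if it admits a left translation invariant, finitely additive
probability measure defined on all of its subsets. -/
def IsAmenable (G : Type) [Group G] : Prop :=
  ∃ m : Set G → ℝ,
    (∀ A : Set G, 0 ≤ m A) ∧ m Set.univ = 1 ∧
    (∀ A B : Set G, Disjoint A B → m (A ∪ B) = m A + m B) ∧
    ∀ (g : G) (A : Set G), m ((g * ·) '' A) = m A

/-! ### Bundled p.m.p. actions on standard probability spaces -/

/-- A p.m.p. action of `G` on a standard probability space, bundled. -/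
structure PmpSystem (G : Type) [Group G] : Type 1 where
  (X : Type)
  [mX : MeasurableSpace X]
  (μ : Measure X)
  (act : G → X → X)
  (standardBorel : StandardBorelSpace X)
  (isProb : IsProbabilityMeasure μ)
  (pmp : IsMpAction act μ)

/-- The bundled action is (essentially) free. -/
def PmpSystem.Free {G : Type} [Group G] (S : PmpSystem G) : Prop :=
  ∀ᵐ x ∂S.μ, ∀ g : G, S.act g x = x → g = 1

/-- The bundled action is ergodic. -/
def PmpSystem.ErgodicAct {G : Type} [Group G] (S : PmpSystem G) : Prop :=
  ∀ A : Set S.X, MeasurableSet[S.mX] A → (∀ g : G, S.act g ⁻¹' A = A) → S.μ A = 0 ∨ S.μ Aᶜ = 0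

/-- Two countable groups are orbit equivalent if they admit orbit equivalent free ergodic
p.m.p. actions on standard probability spaces. -/
def GroupsOrbitEquivalent (G H : Type) [Group G] [Group H] : Prop :=
  ∃ (S : PmpSystem G) (T : PmpSystem H),
    letI := S.mX
    letI := T.mX
    S.Free ∧ T.Free ∧ S.ErgodicAct ∧ T.ErgodicAct ∧
      OrbitEquivalentActions S.act T.act S.μ T.μ

/-! ### Measure equivalence -/

/-- `s` is a measurable fundamental domain for the action `a` on `(Ω, m)`. -/
def IsFundDomain {G Ω : Type} [MeasurableSpace Ω] (a : G → Ω → Ω) (s : Set Ω)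
    (m : Measure Ω) : Prop :=
  MeasurableSet s ∧ (∀ᵐ x ∂m, ∃ g : G, a g x ∈ s) ∧
    ∀ g g' : G, g ≠ g' → m (a g '' s ∩ a g' '' s) = 0

/-- A measure equivalence coupling of `G` with `H`: commuting measure preserving actions on
a standard nonzero σ-finite measure space, each admitting a finite measure measurable
fundamental domain. -/
structure MECoupling (G H : Type) [Group G] [Group H] : Type 1 where
  (Ω : Type)
  [mΩ : MeasurableSpace Ω]
  (m : Measure Ω)
  (aG : G → Ω → Ω)
  (aH : H → Ω → Ω)
  (standardBorel : StandardBorelSpace Ω)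
  (sigmaFinite : SigmaFinite m)
  (nonzero : m ≠ 0)
  (mpG : IsMpAction aG m)
  (mpH : IsMpAction aH m)
  (comm : ∀ (g : G) (h : H) (x : Ω), aG g (aH h x) = aH h (aG g x))
  (FG : Set Ω)
  (FH : Set Ω)
  (fundG : IsFundDomain aG FG m)
  (fundH : IsFundDomain aH FH m)
  (finG : m FG < ⊤)
  (finH : m FH < ⊤)

/-- `G` and `H` are measure equivalent. -/
def MeasureEquivalent (G H : Type) [Group G] [Group H] : Prop :=
  Nonempty (MECoupling G H)

/-- `G` and `H` admit a measure equivalence coupling of coupling index `α`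
(the ratio of the measures of the `H`- and `G`-fundamental domains). -/
def MeasureEquivalentWithIndex (G H : Type) [Group G] [Group H] (α : ℝ≥0∞) : Prop :=
  ∃ c : MECoupling G H, c.m c.FH = α * c.m c.FG



variable {X : Type}

/-! ### Countable Borel equivalence relations and measurable splittings -/

/-- `R` is a p.m.p. countable Borel equivalence relation on `(X, μ)`: every Borel bijection
between Borel subsets whose graph is contained in `R` preserves `μ`. -/
def IsPmpCBER [MeasurableSpace X] (R : X → X → Prop) (μ : Measure X) : Prop :=
  Equivalence R ∧ MeasurableSet {p : X × X | R p.1 p.2} ∧ (∀ x, {y | R x y}.Countable) ∧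
    ∀ (f : X → X) (A B : Set X), Measurable f → MeasurableSet A → MeasurableSet B →
      Set.BijOn f A B → (∀ x ∈ A, R x (f x)) →
      ∀ C : Set X, MeasurableSet C → C ⊆ B → μ (A ∩ f ⁻¹' C) = μ C

/-- The relation `R` is ergodic with respect to `μ`. -/
def IsErgodicRel [MeasurableSpace X] (R : X → X → Prop) (μ : Measure X) : Prop :=
  ∀ A : Set X, MeasurableSet A → (∀ x y, R x y → (x ∈ A ↔ y ∈ A)) → μ A = 0 ∨ μ Aᶜ = 0

/-- The subrelations `R₀` and `R₁` are freely independent: there is no reduced cycle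
alternating between nontrivial `R₀`-steps and `R₁`-steps. -/
def FreelyIndepRel (R₀ R₁ : X → X → Prop) : Prop :=
  ¬ ∃ (n : ℕ) (i : ℕ → Fin 2) (x : ℕ → X),
      2 ≤ n ∧ x n = x 0 ∧ (∀ j < n, x j ≠ x (j + 1)) ∧
      (∀ j, j + 1 < n → i j ≠ i (j + 1)) ∧
      (∀ j < n, if i j = 0 then R₀ (x j) (x (j + 1)) else R₁ (x j) (x (j + 1)))

/-- `R` splits as the free product `R = R₀ ∗ R₁`: `R₀` and `R₁` are freely independent
subequivalence relations generating `R`. -/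
def SplitsAs (R R₀ R₁ : X → X → Prop) : Prop :=
  Equivalence R₀ ∧ Equivalence R₁ ∧ (∀ x y, R₀ x y → R x y) ∧ (∀ x y, R₁ x y → R x y) ∧
    FreelyIndepRel R₀ R₁ ∧
    ∀ x y, R x y ↔ Relation.EqvGen (fun u v => R₀ u v ∨ R₁ u v) x y

/-- The splitting `R = R₀ ∗ R₁` is inessential on the (invariant) set `C`. -/
def InessentialOn [MeasurableSpace X] (R R₀ R₁ : X → X → Prop) (C : Set X) : Prop :=
  ∃ X₀ X₁ : Set X, MeasurableSet X₀ ∧ MeasurableSet X₁ ∧ X₀ ∪ X₁ = C ∧ Disjoint X₀ X₁ ∧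
    (∀ x ∈ C, ∀ y ∈ C, R x y → (x ∈ X₀ ↔ y ∈ X₀)) ∧
    ∃ U₀ U₁ : Set X, MeasurableSet U₀ ∧ MeasurableSet U₁ ∧ U₀ ⊆ X₀ ∧ U₁ ⊆ X₁ ∧
      (∀ x ∈ X₀, ∃ y ∈ U₀, R x y) ∧ (∀ x ∈ X₁, ∃ y ∈ U₁, R x y) ∧
      (∀ x ∈ U₀, ∀ y ∈ U₀, (R x y ↔ R₀ x y)) ∧ (∀ x ∈ U₁, ∀ y ∈ U₁, (R x y ↔ R₁ x y))

/-- The splitting is `μ`-essential: there is no `R`-invariant `μ`-conull Borel set on which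
it is inessential. -/
def MuEssential [MeasurableSpace X] (μ : Measure X) (R R₀ R₁ : X → X → Prop) : Prop :=
  ¬ ∃ C : Set X, MeasurableSet C ∧ μ Cᶜ = 0 ∧ (∀ x y, R x y → (x ∈ C ↔ y ∈ C)) ∧
      InessentialOn R R₀ R₁ C

/-- `R = R₀ ∗ R₁` is a `μ`-essential splitting. -/
def EssentialSplitting [MeasurableSpace X] (μ : Measure X) (R R₀ R₁ : X → X → Prop) : Prop :=
  SplitsAs R R₀ R₁ ∧ MuEssential μ R R₀ R₁

/-- The orbit equivalence relation of an action given by `a`. -/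
def orbitRelOf {G : Type} (a : G → X → X) : X → X → Prop := fun x y => ∃ g : G, a g x = y

/-- The restriction of the relation `R` to the set `C` (extended by equality off `C`). -/
def restrictRel (R : X → X → Prop) (C : Set X) : X → X → Prop :=
  fun x y => x = y ∨ (R x y ∧ x ∈ C ∧ y ∈ C)

/-- `R` is hyperfinite: an increasing union of Borel equivalence relations with finite
classes. -/
def IsHyperfinite [MeasurableSpace X] (R : X → X → Prop) : Prop :=
  ∃ S : ℕ → X → X → Prop,
    (∀ n, Equivalence (S n)) ∧ (∀ n, MeasurableSet {p : X × X | S n p.1 p.2}) ∧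
    (∀ n x y, S n x y → S (n + 1) x y) ∧ (∀ n x, {y | S n x y}.Finite) ∧
    ∀ x y, R x y ↔ ∃ n, S n x y

/-- `R` is `μ`-amenable: off a `μ`-null set it is hyperfinite. -/
def MuAmenableRel [MeasurableSpace X] (R : X → X → Prop) (μ : Measure X) : Prop :=
  ∃ C : Set X, MeasurableSet C ∧ μ Cᶜ = 0 ∧ IsHyperfinite (restrictRel R C)

/-- `R` is `μ`-nowhere amenable: there is no positive measure Borel set on which the
restriction of `R` is amenable. -/
def MuNowhereAmenable [MeasurableSpace X] (R : X → X → Prop) (μ : Measure X) : Prop :=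
  ¬ ∃ A : Set X, MeasurableSet A ∧ 0 < μ A ∧
      ∃ C : Set X, MeasurableSet C ∧ C ⊆ A ∧ μ (A \ C) = 0 ∧
        IsHyperfinite (restrictRel R C)

/-- The symmetric irreflexive graph `E` has no cycles. -/
def HasNoGraphCycles (E : X → X → Prop) : Prop :=
  ¬ ∃ (n : ℕ) (x : ℕ → X), 3 ≤ n ∧ (∀ j < n, E (x j) (x (j + 1))) ∧ x n = x 0 ∧
      ∀ j < n, ∀ k < n, j ≠ k → x j ≠ x k

/-- `R` is treeable: it is generated by a Borel graphing whose connected components are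
acyclic. -/
def IsTreeable [MeasurableSpace X] (R : X → X → Prop) : Prop :=
  ∃ E : X → X → Prop,
    MeasurableSet {p : X × X | E p.1 p.2} ∧ (∀ x y, E x y → E y x) ∧ (∀ x, ¬ E x x) ∧
    (∀ x y, E x y → R x y) ∧ (∀ x y, R x y ↔ Relation.EqvGen E x y) ∧ HasNoGraphCycles E


/-- `Γ` admits an essential measurable splitting: some free p.m.p. action of `Γ` on a
standard probability space has orbit equivalence relation admitting a `μ`-essential
splitting (into Borel subequivalence relations). -/
def AdmitsEssentialMeasurableSplitting (Γ : Type) [Group Γ] : Prop :=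
  ∃ S : PmpSystem Γ, S.Free ∧
    ∃ R₀ R₁ : S.X → S.X → Prop,
      letI := S.mX
      MeasurableSet {p : S.X × S.X | R₀ p.1 p.2} ∧
      MeasurableSet {p : S.X × S.X | R₁ p.1 p.2} ∧
      EssentialSplitting S.μ (orbitRelOf S.act) R₀ R₁


variable {X Y Z : Type}

/-! ### Cocycles and superrigidity -/

/-- A measurable `L`-valued cocycle over the action `a`. -/
def IsCocycle {G L : Type} [Group G] [MeasurableSpace X] [Group L] [MeasurableSpace L]
    (a : G → X → X) (μ : Measure X) (c : G → X → L) : Prop :=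
  (∀ g : G, Measurable (c g)) ∧
    ∀ g h : G, ∀ᵐ x ∂μ, c (g * h) x = c g (a h x) * c h x

/-- Two cocycles are cohomologous. -/
def Cohomologous {G L : Type} [Group G] [MeasurableSpace X] [Group L] [MeasurableSpace L]
    (a : G → X → X) (μ : Measure X) (c₀ c₁ : G → X → L) : Prop :=
  ∃ f : X → L, Measurable f ∧ ∀ g : G, ∀ᵐ x ∂μ, f (a g x) * c₀ g x * (f x)⁻¹ = c₁ g x

/-- The action `a` is `L`-cocycle superrigid: every measurable `L`-valued cocycle is
cohomologous to a group homomorphism. -/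
def IsCocycleSuperrigid {G : Type} [Group G] [MeasurableSpace X]
    (L : Type) [Group L] [MeasurableSpace L] (a : G → X → X) (μ : Measure X) : Prop :=
  ∀ c : G → X → L, IsCocycle a μ c →
    ∃ ρ : G →* L, Cohomologous a μ c fun g _ => ρ g

/-- The action is `𝒢_ctble`-cocycle superrigid: `L`-cocycle superrigid for every countable
discrete group `L`. -/
def IsGctbleCocycleSuperrigid {G : Type} [Group G] [MeasurableSpace X]
    (a : G → X → X) (μ : Measure X) : Prop :=
  ∀ (L : Type) [Group L] [MeasurableSpace L] [MeasurableSingletonClass L],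
    Countable L → IsCocycleSuperrigid L a μ

/-- The action is strongly ergodic. -/
def IsStronglyErgodic {G : Type} [Group G] [MeasurableSpace X]
    (a : G → X → X) (μ : Measure X) : Prop :=
  ∀ A : ℕ → Set X, (∀ n, MeasurableSet (A n)) →
    (∀ g : G, Tendsto (fun n => μ (symmDiff (a g '' A n) (A n))) atTop (nhds 0)) →
    Tendsto (fun n => μ (A n) * μ (A n)ᶜ) atTop (nhds 0)

/-- Soficity of a group. -/
def IsSofic (G : Type) [Group G] : Prop :=
  ∀ (F : Finset G) (ε : ℝ), 0 < ε →
    ∃ (n : ℕ) (σ : G → Equiv.Perm (Fin n)),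
      (∀ g ∈ F, ∀ h ∈ F,
        (1 - ε) * n ≤ ((Finset.univ.filter fun i => σ (g * h) i = σ g (σ h i)).card : ℝ)) ∧
      ∀ g ∈ F, g ≠ 1 →
        (1 - ε) * n ≤ ((Finset.univ.filter fun i => σ g i ≠ i).card : ℝ)

/-! ### Internal free products -/

/-- `Γ` is the internal free product of its subgroups `Λ` and `H`: together they generate
`Γ` and no alternating product of nonidentity elements is the identity. -/
def IsInternalFreeProduct {Γ : Type} [Group Γ] (Λ H : Subgroup Γ) : Prop :=
  Λ ⊔ H = ⊤ ∧
    ∀ (n : ℕ) (w : Fin (n + 1) → Γ) (c : Fin (n + 1) → Bool),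
      (∀ i, w i ≠ 1) →
      (∀ i, if c i then w i ∈ Λ else w i ∈ H) →
      (∀ i : Fin n, c i.castSucc ≠ c i.succ) →
      (List.ofFn w).prod ≠ 1





/-! ### Cofinitely equivariant maps -/

/-- `x ∼_B y`: the functions differ in finitely many coordinates, and wherever they differ
the values lie in the same `B`-orbit. -/
def simRel (β : B → Y → Y) (x y : Γ → Y) : Prop :=
  {γ : Γ | x γ ≠ y γ}.Finite ∧ ∀ γ : Γ, x γ ≠ y γ → ∃ l : B, β l (x γ) = y γ

/-- `φ` is cofinitely equivariant with respect to the given actions of `B` and `C`. -/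
def CofinitelyEquivariant [Group Γ] [MeasurableSpace Y] (β : B → Y → Y) (χ : C → Z → Z)
    (νΓ : Measure (Γ → Y)) (φ : (Γ → Y) → (Γ → Z)) : Prop :=
  ∀ᵐ y ∂νΓ, ∀ x : Γ → Y, simRel β x y → ∀ γ : Γ,
    simRel χ (φ (shiftS γ x)) (shiftS γ (φ y))

/-- `φ` (with a.e. inverse `ψ`) is a bi-cofinitely equivariant measure space isomorphism. -/
def BiCofinitelyEquivariant [Group Γ] [MeasurableSpace Y] [MeasurableSpace Z]
    (β : B → Y → Y) (χ : C → Z → Z) (νΓ : Measure (Γ → Y)) (ηΓ : Measure (Γ → Z))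
    (φ : (Γ → Y) → (Γ → Z)) (ψ : (Γ → Z) → (Γ → Y)) : Prop :=
  MeasurePreserving φ νΓ ηΓ ∧ Measurable ψ ∧
    (∀ᵐ y ∂νΓ, ψ (φ y) = y) ∧ (∀ᵐ z ∂ηΓ, φ (ψ z) = z) ∧
    CofinitelyEquivariant β χ νΓ φ ∧ CofinitelyEquivariant χ β ηΓ ψ

/-! ### Stable orbit equivalence -/

/-- The actions `a` and `b` are stably orbit equivalent. -/
def StablyOrbitEquivalent {G H : Type} [MeasurableSpace X] [MeasurableSpace Y]
    (a : G → X → X) (b : H → Y → Y) (μ : Measure X) (ν : Measure Y) : Prop :=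
  ∃ (X₀ : Set X) (Y₀ : Set Y) (φ : X → Y),
    MeasurableSet X₀ ∧ MeasurableSet Y₀ ∧ 0 < μ X₀ ∧ 0 < ν Y₀ ∧
    (∀ᵐ x ∂μ.restrict X₀, φ x ∈ Y₀) ∧
    MeasurePreserving φ ((μ X₀)⁻¹ • μ.restrict X₀) ((ν Y₀)⁻¹ • ν.restrict Y₀) ∧
    (∃ ψ : Y → X, Measurable ψ ∧ (∀ᵐ x ∂μ.restrict X₀, ψ (φ x) = x) ∧
      (∀ᵐ y ∂ν.restrict Y₀, φ (ψ y) = y)) ∧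
    ∀ᵐ x ∂μ.restrict X₀,
      (∀ g : G, a g x ∈ X₀ → ∃ h : H, φ (a g x) = b h (φ x)) ∧
      (∀ h : H, b h (φ x) ∈ Y₀ → ∃ g : G, a g x ∈ X₀ ∧ φ (a g x) = b h (φ x))



section SRAux

private def srN (m : ℕ) : ℕ := (m+1).factorial * 4^(m+1)

private lemma srN_pos (m : ℕ) : 0 < srN m :=
  Nat.mul_pos (Nat.factorial_pos _) (by positivity)

private lemma srN_succ (m : ℕ) : srN (m+1) = (m+2) * 4 * srN m := by
  unfold srN
  rw [Nat.factorial_succ]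
  ring

private lemma srN_sum7 (n : ℕ) : 7 * (∑ j ∈ Finset.range n, srN j) ≤ srN n := by
  induction n with
  | zero => simp
  | succ n ih =>
    rw [Finset.sum_range_succ, Nat.mul_add]
    have h8 : 8 * srN n ≤ srN (n+1) := by
      rw [srN_succ]
      nlinarith [srN_pos n]
    omega

private lemma srN_dvd {n m : ℕ} (h : n ≤ m) : srN n ∣ srN m :=
  mul_dvd_mul (Nat.factorial_dvd_factorial (by omega)) (pow_dvd_pow 4 (by omega))

private lemma srN_ge (n : ℕ) : n + 1 ≤ srN n :=
  le_trans (Nat.self_le_factorial (n+1))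
    (Nat.le_mul_of_pos_right _ (by positivity))

private lemma int_eq_zero_of_dvd_of_abs_lt {q z : ℤ} (hdvd : q ∣ z) (h : |z| < q) : z = 0 := by
  rcases eq_or_ne z 0 with hz | hz
  · exact hz
  · have h1 : q ≤ |z| := Int.le_of_dvd (abs_pos.2 hz) ((dvd_abs _ _).2 hdvd)
    omega

end SRAux

set_option maxHeartbeats 2000000 in
/-- An ergodic p.m.p. action that is `ℤ`-cocycle superrigid (with `ℤ`
discrete) is strongly ergodic. -/
theorem stronglyErgodic_of_Z_cocycle_superrigid
    (Γ X : Type) [Group Γ] [Countable Γ]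
    [MeasurableSpace X] [StandardBorelSpace X] (μ : Measure X) [IsProbabilityMeasure μ]
    (a : Γ → X → X) (ha : IsPmpAction a μ) (herg : IsErgodicAction a μ)
    (hsr : @IsCocycleSuperrigid X Γ _ _ (Multiplicative ℤ) _ ⊤ a μ) :
    IsStronglyErgodic a μ := by
  classical
  obtain ⟨hone, hmul, hmp⟩ := ha.2
  have hcanc : ∀ (γ : Γ) (x : X), a γ⁻¹ (a γ x) = x := by
    intro γ x
    rw [← hmul, inv_mul_cancel, hone]
  have hcanc' : ∀ (γ : Γ) (x : X), a γ (a γ⁻¹ x) = x := by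
    intro γ x
    rw [← hmul, mul_inv_cancel, hone]
  have hpre_img : ∀ (γ : Γ) (S : Set X), a γ ⁻¹' S = a γ⁻¹ '' S := by
    intro γ S
    ext x
    constructor
    · intro hx
      exact ⟨a γ x, hx, hcanc γ x⟩
    · rintro ⟨y, hy, rfl⟩
      simpa [Set.mem_preimage, hcanc' γ y] using hy
  -- zero-one law for a.e. invariant sets
  have zeroone : ∀ S : Set X, MeasurableSet S →
      (∀ γ : Γ, μ (symmDiff (a γ ⁻¹' S) S) = 0) → μ S = 0 ∨ μ Sᶜ = 0 := by
    intro S hSm hSi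
    set N : Set X := ⋃ γ : Γ, symmDiff (a γ ⁻¹' S) S with hNdef
    have hNm : MeasurableSet N :=
      MeasurableSet.iUnion fun γ => (((hmp γ).measurable hSm).symmDiff hSm)
    have hN0 : μ N = 0 := measure_iUnion_null fun γ => hSi γ
    set Nt : Set X := ⋃ γ : Γ, a γ ⁻¹' N with hNtdef
    have hNtm : MeasurableSet Nt := MeasurableSet.iUnion fun γ => (hmp γ).measurable hNm
    have hNt0 : μ Nt = 0 :=
      measure_iUnion_null fun γ => (hmp γ).quasiMeasurePreserving.preimage_null hN0
    have hNN : N ⊆ Nt := by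
      intro x hx
      refine Set.mem_iUnion.2 ⟨1, ?_⟩
      simpa [Set.mem_preimage, hone] using hx
    have hNtinv : ∀ γ : Γ, a γ ⁻¹' Nt = Nt := by
      intro γ
      ext x
      simp only [hNtdef, Set.mem_preimage, Set.mem_iUnion]
      constructor
      · rintro ⟨δ, hδ⟩
        refine ⟨δ * γ, ?_⟩
        rwa [hmul]
      · rintro ⟨δ, hδ⟩
        refine ⟨δ * γ⁻¹, ?_⟩
        rw [hmul, hcanc]
        exact hδ
    have hkey : ∀ γ : Γ, a γ ⁻¹' (S ∪ Nt) = S ∪ Nt := by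
      intro γ
      rw [Set.preimage_union, hNtinv γ]
      have hsd : symmDiff (a γ ⁻¹' S) S ⊆ Nt := fun x hx => hNN (Set.mem_iUnion.2 ⟨γ, hx⟩)
      ext x
      constructor
      · rintro (hx | hx)
        · by_cases hxS : x ∈ S
          · exact Or.inl hxS
          · exact Or.inr (hsd (Set.mem_symmDiff.2 (Or.inl ⟨hx, hxS⟩)))
        · exact Or.inr hx
      · rintro (hx | hx)
        · by_cases hxP : x ∈ a γ ⁻¹' S
          · exact Or.inl hxP
          · exact Or.inr (hsd (Set.mem_symmDiff.2 (Or.inr ⟨hx, hxP⟩)))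
        · exact Or.inr hx
    rcases herg (S ∪ Nt) (hSm.union hNtm) hkey with h0 | h1
    · exact Or.inl (measure_mono_null Set.subset_union_left h0)
    · refine Or.inr ?_
      have hsub : Sᶜ ⊆ (S ∪ Nt)ᶜ ∪ Nt := by
        intro x hx
        by_cases hxt : x ∈ Nt
        · exact Or.inr hxt
        · exact Or.inl (by simp only [Set.mem_compl_iff, Set.mem_union]; tauto)
      exact measure_mono_null hsub (measure_union_null h1 hNt0)
  -- begin the main argument
  intro A hA hAinv
  by_contra hcon
  rw [ENNReal.tendsto_nhds_zero] at hcon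
  push_neg at hcon
  obtain ⟨ε, hε, hfreq'⟩ := hcon
  have hfreq : ∃ᶠ n in atTop, ε < μ (A n) * μ (A n)ᶜ :=
    hfreq'.mono fun n hn => hn
  have hεlt1 : ε < 1 := by
    rcases hfreq.exists with ⟨n, hn⟩
    exact lt_of_lt_of_le hn (le_trans (mul_le_of_le_one_right zero_le prob_le_one) prob_le_one)
  obtain ⟨e, he⟩ := exists_surjective_nat Γ
  -- diagonal extraction of an asymptotically invariant subsequence
  have hms : ∀ k : ℕ, ∃ n : ℕ, (ε < μ (A n) * μ (A n)ᶜ) ∧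
      ∀ i ≤ k, μ (symmDiff (a (e i) '' A n) (A n)) ≤ (2⁻¹ : ℝ≥0∞)^k := by
    intro k
    have hev : ∀ᶠ n in atTop, ∀ i ∈ Finset.range (k+1),
        μ (symmDiff (a (e i) '' A n) (A n)) ≤ (2⁻¹ : ℝ≥0∞)^k := by
      rw [Filter.eventually_all_finset]
      intro i _
      refine (ENNReal.tendsto_nhds_zero.mp (hAinv (e i))) _ ?_
      exact ENNReal.pow_pos (ENNReal.inv_pos.2 ENNReal.ofNat_ne_top) k
    obtain ⟨n, hn1, hn2⟩ := (hfreq.and_eventually hev).exists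
    exact ⟨n, hn1, fun i hi => hn2 i (Finset.mem_range.2 (by omega))⟩
  choose ms hms1 hms2 using hms
  set B : ℕ → Set X := fun k => A (ms k) with hBdef
  have hBmeas : ∀ k, MeasurableSet (B k) := fun k => hA (ms k)
  have hBub : ∀ k, ε < μ (B k) ∧ ε < μ (B k)ᶜ := by
    intro k
    have h1 := hms1 k
    constructor
    · exact lt_of_lt_of_le h1 (mul_le_of_le_one_right zero_le prob_le_one)
    · exact lt_of_lt_of_le h1 (mul_le_of_le_one_left zero_le prob_le_one)
  -- summability of the symmetric differences along preimages
  have hsym_sum : ∀ γ : Γ, (∑' m, μ (symmDiff (a γ ⁻¹' B m) (B m))) ≠ ⊤ := by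
    intro γ
    obtain ⟨i, hi⟩ := he γ⁻¹
    have hbound : ∀ m, μ (symmDiff (a γ ⁻¹' B m) (B m)) ≤ (2:ℝ≥0∞)^i * (2⁻¹:ℝ≥0∞)^m := by
      intro m
      have him : a γ ⁻¹' B m = a (e i) '' B m := by rw [hpre_img, hi]
      rcases le_or_gt i m with him2 | him2
      · calc μ (symmDiff (a γ ⁻¹' B m) (B m)) ≤ (2⁻¹:ℝ≥0∞)^m := by
              rw [him]; exact hms2 m i him2
          _ ≤ 2^i * (2⁻¹)^m := le_mul_of_one_le_left zero_le (one_le_pow_of_one_le' one_le_two i)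
      · calc μ (symmDiff (a γ ⁻¹' B m) (B m)) ≤ 1 := prob_le_one
          _ ≤ 2^i * (2⁻¹)^m := by
              have h1 : ((2:ℝ≥0∞) * 2⁻¹)^i ≤ 2^i * (2⁻¹)^m := by
                rw [mul_pow]
                exact mul_le_mul_right
                  (pow_le_pow_of_le_one zero_le (ENNReal.inv_le_one.2 one_le_two)
                    (le_of_lt him2)) _
              rwa [ENNReal.mul_inv_cancel two_ne_zero ENNReal.ofNat_ne_top, one_pow] at h1
    refine ne_top_of_le_ne_top ?_ (ENNReal.tsum_le_tsum hbound)
    rw [ENNReal.tsum_mul_left, ENNReal.tsum_geometric, ENNReal.one_sub_inv_two]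
    exact ENNReal.mul_ne_top (ENNReal.pow_ne_top ENNReal.ofNat_ne_top) (by simp)
  -- the integer-valued cocycle
  set χ : ℕ → X → ℤ := fun m => (B m).indicator (fun _ => (1:ℤ)) with hχdef
  have hχmeas : ∀ m, Measurable (χ m) := fun m => measurable_const.indicator (hBmeas m)
  have hχ0 : ∀ m x, 0 ≤ χ m x := by
    intro m x
    by_cases h : x ∈ B m <;> simp [hχdef, h]
  have hχ1 : ∀ m x, χ m x ≤ 1 := by
    intro m x
    by_cases h : x ∈ B m <;> simp [hχdef, h]
  set t : Γ → X → ℕ → ℤ := fun γ x m => (srN m : ℤ) * (χ m (a γ x) - χ m x) with htdef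
  have hint : ∀ {u v : X → ℤ}, Measurable u → Measurable v → ∀ op : ℤ → ℤ → ℤ,
      Measurable (fun x => op (u x) (v x)) := by
    intro u v hu hv op
    exact (measurable_of_countable (fun p : ℤ × ℤ => op p.1 p.2)).comp (hu.prodMk hv)
  have htmeas : ∀ γ m, Measurable (fun x => t γ x m) := fun γ m =>
    hint ((hχmeas m).comp (hmp γ).measurable) (hχmeas m) (fun u v => (srN m : ℤ) * (u - v))
  have htsupp : ∀ γ x m, t γ x m ≠ 0 → x ∈ symmDiff (a γ ⁻¹' B m) (B m) := by
    intro γ x m hne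
    rw [Set.mem_symmDiff]
    by_cases h1 : a γ x ∈ B m <;> by_cases h2 : x ∈ B m
    · exact absurd (by simp [htdef, hχdef, h1, h2]) hne
    · exact Or.inl ⟨h1, h2⟩
    · exact Or.inr ⟨h2, fun hx => h1 hx⟩
    · exact absurd (by simp [htdef, hχdef, h1, h2]) hne
  set g : ℕ → X → ℤ := fun n x => ∑ m ∈ Finset.range n, (srN m : ℤ) * χ m x with hgdef
  have hgmeas : ∀ n, Measurable (g n) := by
    intro n
    induction n with
    | zero => simpa [hgdef] using measurable_const
    | succ n ih =>
      have hrw : g (n+1) = fun x => g n x + (srN n : ℤ) * χ n x := by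
        funext x
        simp [hgdef, Finset.sum_range_succ]
      rw [hrw]
      exact hint ih (hχmeas n) (fun u v => u + (srN n : ℤ) * v)
  have hg_nonneg : ∀ n x, 0 ≤ g n x := by
    intro n x
    refine Finset.sum_nonneg fun m _ => ?_
    have := hχ0 m x
    positivity
  have hg_le : ∀ n x, g n x ≤ ∑ m ∈ Finset.range n, (srN m : ℤ) := by
    intro n x
    refine Finset.sum_le_sum fun m _ => ?_
    have h1 := hχ1 m x
    have h2 : (0:ℤ) ≤ (srN m : ℤ) := by positivity
    nlinarith
  set c : Γ → X → ℤ := fun γ x => ∑ᶠ m, t γ x m with hcdef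
  -- a.e. finite support (Borel--Cantelli)
  have hD : ∀ γ : Γ, ∀ᵐ x ∂μ, (Function.support fun m => t γ x m).Finite := by
    intro γ
    have hlim : μ (Filter.limsup (fun m => symmDiff (a γ ⁻¹' B m) (B m)) atTop) = 0 :=
      measure_limsup_atTop_eq_zero (hsym_sum γ)
    rw [ae_iff]
    refine measure_mono_null ?_ hlim
    intro x hx
    simp only [Set.mem_setOf_eq] at hx
    have hinf : {m | x ∈ symmDiff (a γ ⁻¹' B m) (B m)}.Infinite :=
      Set.Infinite.mono (fun m hm => htsupp γ x m hm)
        (hx : (Function.support fun m => t γ x m).Infinite)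
    exact mem_limsup_iff_frequently_mem.2 (Nat.frequently_atTop_iff_infinite.2 hinf)
  -- fibers of the cocycle are measurable
  have hPSmeas : ∀ (γ : Γ) (N : ℕ), Measurable (fun x => ∑ m ∈ Finset.range N, t γ x m) := by
    intro γ N
    induction N with
    | zero => simpa using measurable_const
    | succ N ih =>
      have hrw : (fun x => ∑ m ∈ Finset.range (N+1), t γ x m)
          = fun x => (∑ m ∈ Finset.range N, t γ x m) + t γ x N := by
        funext x
        rw [Finset.sum_range_succ]
      rw [hrw]
      exact hint ih (htmeas γ N) (· + ·)
  have hGmeas : ∀ (γ : Γ) (N : ℕ), MeasurableSet {x | ∀ m, N ≤ m → t γ x m = 0} := by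
    intro γ N
    have hrw : {x | ∀ m, N ≤ m → t γ x m = 0}
        = ⋂ m, ⋂ (_ : N ≤ m), (fun x => t γ x m) ⁻¹' {0} := by
      ext x
      simp
    rw [hrw]
    exact MeasurableSet.iInter fun m => MeasurableSet.iInter fun _ =>
      (htmeas γ m) (measurableSet_singleton 0)
  have hsupp_of_G : ∀ (γ : Γ) (N : ℕ) (x : X), (∀ m, N ≤ m → t γ x m = 0) →
      c γ x = ∑ m ∈ Finset.range N, t γ x m := by
    intro γ N x hx
    refine finsum_eq_sum_of_support_subset _ ?_
    intro m hm
    simp only [Finset.coe_range, Set.mem_Iio]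
    by_contra hNm
    exact hm (hx m (by omega))
  have hcfib : ∀ (γ : Γ) (k : ℤ), MeasurableSet {x | c γ x = k} := by
    intro γ k
    have hdecomp : {x | c γ x = k} =
        ({x | ¬ (Function.support fun m => t γ x m).Finite} ∩ {x | (0:ℤ) = k}) ∪
          ⋃ N : ℕ, ({x | ∀ m, N ≤ m → t γ x m = 0} ∩
            (fun x => ∑ m ∈ Finset.range N, t γ x m) ⁻¹' {k}) := by
      ext x
      simp only [Set.mem_setOf_eq, Set.mem_union, Set.mem_inter_iff, Set.mem_iUnion,
        Set.mem_preimage, Set.mem_singleton_iff]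
      constructor
      · intro hx
        by_cases hf : (Function.support fun m => t γ x m).Finite
        · obtain ⟨b, hb⟩ := hf.bddAbove
          refine Or.inr ⟨b+1, fun m hm => ?_, ?_⟩
          · by_contra hne
            exact absurd (hb hne) (by omega)
          · rw [← hsupp_of_G γ (b+1) x (fun m hm => ?_)]
            · exact hx
            · by_contra hne
              exact absurd (hb hne) (by omega)
        · refine Or.inl ⟨hf, ?_⟩
          rw [← hx, hcdef]
          exact (finsum_of_infinite_support hf).symm
      · rintro (⟨hf, h0⟩ | ⟨N, hzero, hsum⟩)
        · rw [hcdef]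
          simp only
          rw [finsum_of_infinite_support hf]
          exact h0
        · rw [hsupp_of_G γ N x hzero]
          exact hsum
    rw [hdecomp]
    have hfinset : MeasurableSet {x : X | ¬ (Function.support fun m => t γ x m).Finite} := by
      have hrw : {x : X | (Function.support fun m => t γ x m).Finite}
          = ⋃ N : ℕ, {x | ∀ m, N ≤ m → t γ x m = 0} := by
        ext x
        simp only [Set.mem_setOf_eq, Set.mem_iUnion]
        constructor
        · intro hf
          obtain ⟨b, hb⟩ := hf.bddAbove
          refine ⟨b+1, fun m hm => ?_⟩
          by_contra hne
          exact absurd (hb hne) (by omega)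
        · rintro ⟨N, hN⟩
          refine Set.Finite.subset (Set.finite_Iio N) ?_
          intro m hm
          simp only [Set.mem_Iio]
          by_contra hNm
          exact hm (hN m (by omega))
      have : {x : X | ¬ (Function.support fun m => t γ x m).Finite}
          = {x : X | (Function.support fun m => t γ x m).Finite}ᶜ := by
        ext x; simp
      rw [this, hrw]
      exact (MeasurableSet.iUnion fun N => hGmeas γ N).compl
    refine MeasurableSet.union (hfinset.inter ?_) ?_
    · by_cases hk : (0:ℤ) = k
      · simp only [hk, Set.setOf_true]
        exact MeasurableSet.univ
      · simp only [hk, Set.setOf_false]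
        exact MeasurableSet.empty
    · exact MeasurableSet.iUnion fun N =>
        (hGmeas γ N).inter ((hPSmeas γ N) (measurableSet_singleton k))
  -- the multiplicative cocycle
  set cm : Γ → X → Multiplicative ℤ := fun γ x => Multiplicative.ofAdd (c γ x) with hcmdef
  have hcm_meas : ∀ γ, @Measurable X (Multiplicative ℤ) _ ⊤ (cm γ) := by
    intro γ s _
    have hrw : cm γ ⁻¹' s = ⋃ (k : ℤ) (_ : Multiplicative.ofAdd k ∈ s), {x | c γ x = k} := by
      ext x
      simp only [Set.mem_preimage, Set.mem_iUnion, Set.mem_setOf_eq]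
      constructor
      · intro hx
        exact ⟨c γ x, hx, rfl⟩
      · rintro ⟨k, hk, hxk⟩
        simpa [hcmdef, hxk] using hk
    rw [hrw]
    exact MeasurableSet.iUnion fun k => MeasurableSet.iUnion fun _ => hcfib γ k
  have hccoc : ∀ γ δ : Γ, ∀ᵐ x ∂μ, cm (γ * δ) x = cm γ (a δ x) * cm δ x := by
    intro γ δ
    have hpre : ∀ᵐ x ∂μ, (Function.support fun m => t γ (a δ x) m).Finite := by
      have h0 := hD γ
      rw [ae_iff] at h0 ⊢
      exact (hmp δ).quasiMeasurePreserving.preimage_null h0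
    filter_upwards [hD (γ*δ), hD δ, hpre] with x h1 h2 h3
    have hterm : ∀ m, t (γ*δ) x m = t γ (a δ x) m + t δ x m := by
      intro m
      simp only [htdef, hmul]
      ring
    have hsum : c (γ*δ) x = c γ (a δ x) + c δ x := by
      simp only [hcdef]
      calc ∑ᶠ m, t (γ*δ) x m = ∑ᶠ m, (t γ (a δ x) m + t δ x m) := finsum_congr hterm
        _ = (∑ᶠ m, t γ (a δ x) m) + ∑ᶠ m, t δ x m := finsum_add_distrib h3 h2
    simp only [hcmdef, hsum, ofAdd_add]
  obtain ⟨ρ, f, hfmeas, hcob⟩ := hsr cm ⟨hcm_meas, hccoc⟩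
  set F : X → ℤ := fun x => Multiplicative.toAdd (f x) with hFdef
  set hh : Γ → ℤ := fun γ => Multiplicative.toAdd (ρ γ) with hhdef
  have hFfib : ∀ k : ℤ, MeasurableSet {x | F x = k} := by
    intro k
    have hrw : {x | F x = k} = f ⁻¹' {Multiplicative.ofAdd k} := by
      ext x
      simp only [Set.mem_setOf_eq, Set.mem_preimage, Set.mem_singleton_iff, hFdef]
      constructor
      · intro hx
        rw [← hx]
        rfl
      · intro hx
        rw [hx]
        rfl
    rw [hrw]
    exact hfmeas MeasurableSpace.measurableSet_top
  have hFmeas : Measurable F := by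
    intro s _
    have hrw : F ⁻¹' s = ⋃ (k : ℤ) (_ : k ∈ s), {x | F x = k} := by
      ext x
      simp only [Set.mem_preimage, Set.mem_iUnion, Set.mem_setOf_eq]
      constructor
      · intro hx
        exact ⟨F x, hx, rfl⟩
      · rintro ⟨k, hk, hxk⟩
        rwa [hxk]
    rw [hrw]
    exact MeasurableSet.iUnion fun k => MeasurableSet.iUnion fun _ => hFfib k
  have hHmeas : ∀ n : ℕ, Measurable (fun x => F x + g n x) :=
    fun n => hint hFmeas (hgmeas n) (· + ·)
  have hVmeas : ∀ (n : ℕ) (q s : ℤ), MeasurableSet {x | (F x + g n x) % q = s} := by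
    intro n q s
    have hrw : {x | (F x + g n x) % q = s}
        = (fun x => (F x + g n x) % q) ⁻¹' {s} := rfl
    rw [hrw]
    exact ((measurable_of_countable (fun z : ℤ => z % q)).comp (hHmeas n))
      (measurableSet_singleton s)
  have hcohAE : ∀ γ : Γ, ∀ᵐ x ∂μ, c γ x = hh γ + F x - F (a γ x) := by
    intro γ
    filter_upwards [hcob γ] with x hx
    have h1 := congrArg Multiplicative.toAdd hx
    simp only [toAdd_mul, toAdd_inv, hcmdef, toAdd_ofAdd] at h1
    -- h1 : toAdd (f (a γ x)) + c γ x + (-toAdd (f x)) = toAdd (ρ γ)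
    simp only [hFdef, hhdef]
    omega
  -- the key congruence
  have claimA : ∀ (γ : Γ) (n : ℕ), ∀ᵐ x ∂μ,
      ((srN n : ℤ)) ∣ ((F (a γ x) + g n (a γ x)) - (F x + g n x) - hh γ) := by
    intro γ n
    filter_upwards [hD γ, hcohAE γ] with x hfin hc
    obtain ⟨b, hb⟩ := hfin.bddAbove
    set N := max n (b+1) with hN
    have hcsum : c γ x = ∑ m ∈ Finset.range N, t γ x m := by
      refine hsupp_of_G γ N x ?_
      intro m hm
      by_contra hne
      have := hb hne
      omega
    have hsplit : ∑ m ∈ Finset.range N, t γ x m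
        = ∑ m ∈ Finset.range n, t γ x m + ∑ m ∈ Finset.Ico n N, t γ x m :=
      (Finset.sum_range_add_sum_Ico _ (le_max_left _ _)).symm
    have hhead : ∑ m ∈ Finset.range n, t γ x m = g n (a γ x) - g n x := by
      simp only [hgdef, htdef, ← Finset.sum_sub_distrib]
      exact Finset.sum_congr rfl fun m _ => by ring
    have htail : ((srN n : ℤ)) ∣ ∑ m ∈ Finset.Ico n N, t γ x m := by
      refine Finset.dvd_sum fun m hm => ?_
      have hnm : n ≤ m := (Finset.mem_Ico.1 hm).1
      exact Dvd.dvd.mul_right (Int.natCast_dvd_natCast.2 (srN_dvd hnm)) _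
    have hrw : (F (a γ x) + g n (a γ x)) - (F x + g n x) - hh γ
        = -(∑ m ∈ Finset.Ico n N, t γ x m) := by
      rw [hcsum, hsplit, hhead] at hc
      linarith
    rw [hrw]
    exact dvd_neg.2 htail
  -- the homomorphism and its generator
  have hh_hom : ∀ γ δ : Γ, hh (γ*δ) = hh γ + hh δ := by
    intro γ δ
    simp [hhdef, map_mul]
  have hh_one : hh 1 = 0 := by simp [hhdef]
  have hh_inv : ∀ γ : Γ, hh γ⁻¹ = - hh γ := by
    intro γ
    simp [hhdef]
  set HS : AddSubgroup ℤ :=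
    { carrier := Set.range hh
      add_mem' := by
        rintro x y ⟨γ, rfl⟩ ⟨δ, rfl⟩
        exact ⟨γ * δ, (hh_hom γ δ)⟩
      zero_mem' := ⟨1, hh_one⟩
      neg_mem' := by
        rintro x ⟨γ, rfl⟩
        exact ⟨γ⁻¹, hh_inv γ⟩ } with hHSdef
  obtain ⟨d₀, hd₀⟩ := Int.subgroup_cyclic HS
  have hdvd_all : ∀ γ : Γ, d₀ ∣ hh γ := by
    intro γ
    have hmem : hh γ ∈ HS := ⟨γ, rfl⟩
    rw [hd₀, AddSubgroup.mem_closure_singleton] at hmem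
    obtain ⟨k, hk⟩ := hmem
    exact ⟨k, by rw [← hk, zsmul_eq_mul, Int.cast_id, mul_comm]⟩
  have hd₀mem : ∃ γ : Γ, hh γ = d₀ := by
    have hmem : d₀ ∈ HS := by
      rw [hd₀]
      exact AddSubgroup.mem_closure_singleton_self d₀
    exact hmem
  -- choosing the cutoff for |F|
  have hMex : ∀ η : ℝ≥0∞, 0 < η → ∃ M : ℕ, μ {x | (M:ℤ) < |F x|} < η := by
    intro η hη
    set Dm : ℕ → Set X := fun M => {x | (M:ℤ) < |F x|} with hDm
    have hDmmeas : ∀ M, MeasurableSet (Dm M) := by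
      intro M
      have hrw : Dm M = ⋃ (k : ℤ) (_ : (M:ℤ) < |k|), {x | F x = k} := by
        ext x
        simp only [hDm, Set.mem_setOf_eq, Set.mem_iUnion]
        constructor
        · intro hx
          exact ⟨F x, hx, rfl⟩
        · rintro ⟨k, hk, hxk⟩
          rwa [hxk]
      rw [hrw]
      exact MeasurableSet.iUnion fun k => MeasurableSet.iUnion fun _ => hFfib k
    have hanti : Antitone Dm := by
      intro i j hij x hx
      simp only [hDm, Set.mem_setOf_eq] at hx ⊢
      have : (i:ℤ) ≤ (j:ℤ) := by exact_mod_cast hij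
      omega
    have hempty : ⋂ M, Dm M = ∅ := by
      ext x
      simp only [hDm, Set.mem_iInter, Set.mem_setOf_eq, Set.mem_empty_iff_false, iff_false,
        not_forall, not_lt]
      exact ⟨(F x).natAbs, by rw [Int.abs_eq_natAbs]⟩
    have htend := tendsto_measure_iInter_atTop
      (fun M => (hDmmeas M).nullMeasurableSet) hanti ⟨0, measure_ne_top μ _⟩
    rw [hempty, measure_empty] at htend
    obtain ⟨M, hM⟩ := (htend.eventually (Iio_mem_nhds hη)).exists
    exact ⟨M, hM⟩
  have hT7 : ∀ n : ℕ, 7 * (∑ m ∈ Finset.range n, (srN m : ℤ)) ≤ (srN n : ℤ) := by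
    intro n
    exact_mod_cast srN_sum7 n
  have hT0 : ∀ n : ℕ, 0 ≤ ∑ m ∈ Finset.range n, (srN m : ℤ) :=
    fun n => Finset.sum_nonneg fun m _ => by positivity
  by_cases hdz : d₀ = 0
  · -- CASE 1 : the homomorphism is trivial
    have hall : ∀ γ : Γ, hh γ = 0 := by
      intro γ
      have h1 := hdvd_all γ
      rw [hdz] at h1
      exact zero_dvd_iff.1 h1
    have hconst : ∀ n : ℕ, ∃ s₀ : ℤ, μ {x | (F x + g n x) % (srN n : ℤ) = s₀} = 1 := by
      intro n
      set q : ℤ := (srN n : ℤ) with hq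
      have hqpos : (0:ℤ) < q := by
        rw [hq]
        exact_mod_cast srN_pos n
      have hinv : ∀ s : ℤ, ∀ γ : Γ,
          μ (symmDiff (a γ ⁻¹' {x | (F x + g n x) % q = s}) {x | (F x + g n x) % q = s}) = 0 := by
        intro s γ
        have hgood := claimA γ n
        rw [ae_iff] at hgood
        refine measure_mono_null ?_ hgood
        intro x hx
        simp only [Set.mem_symmDiff, Set.mem_preimage, Set.mem_setOf_eq] at hx
        simp only [Set.mem_setOf_eq]
        intro hdvd
        rw [hall γ, sub_zero] at hdvd
        have hmod : (F (a γ x) + g n (a γ x)) % q = (F x + g n x) % q :=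
          (Int.modEq_iff_dvd.2 hdvd : Int.ModEq q _ _).symm
        rcases hx with ⟨h1, h2⟩ | ⟨h1, h2⟩
        · exact h2 (hmod.symm.trans h1)
        · exact h2 (hmod.trans h1)
      by_contra hno
      push_neg at hno
      have hzero : ∀ s : ℤ, μ {x | (F x + g n x) % q = s} = 0 := by
        intro s
        rcases zeroone _ (hVmeas n q s) (hinv s) with h | h
        · exact h
        · exact absurd ((prob_compl_eq_zero_iff (hVmeas n q s)).1 h) (hno s)
      have hcover : (Set.univ : Set X) ⊆
          ⋃ s ∈ Finset.Ico (0:ℤ) q, {x | (F x + g n x) % q = s} := by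
        intro x _
        have hmem : (F x + g n x) % q ∈ Finset.Ico (0:ℤ) q :=
          Finset.mem_Ico.2 ⟨Int.emod_nonneg _ (ne_of_gt hqpos), Int.emod_lt_of_pos _ hqpos⟩
        exact Set.mem_biUnion hmem rfl
      have hle : (1:ℝ≥0∞) ≤ 0 := by
        calc (1:ℝ≥0∞) = μ Set.univ := measure_univ.symm
          _ ≤ μ (⋃ s ∈ Finset.Ico (0:ℤ) q, {x | (F x + g n x) % q = s}) := measure_mono hcover
          _ ≤ ∑ s ∈ Finset.Ico (0:ℤ) q, μ {x | (F x + g n x) % q = s} :=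
              measure_biUnion_finset_le _ _
          _ = 0 := Finset.sum_eq_zero fun s _ => hzero s
      simp at hle
    obtain ⟨M, hM⟩ := hMex ε hε
    set n : ℕ := 14 * (M + 1) with hn
    obtain ⟨s₀, hs₀⟩ := hconst n
    obtain ⟨s₁, hs₁⟩ := hconst (n+1)
    set E : Set X := {x | |F x| ≤ (M:ℤ)} with hE
    have hEc : μ Eᶜ < ε := by
      have hrw : Eᶜ = {x | (M:ℤ) < |F x|} := by
        ext x
        simp [hE, not_le]
      rwa [hrw]
    have hq0pos : (0:ℤ) < (srN n : ℤ) := by exact_mod_cast srN_pos n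
    have hbig : ∀ m : ℕ, n ≤ m →
        2*(M:ℤ) + (∑ j ∈ Finset.range m, (srN j : ℤ)) < (srN m : ℤ) := by
      intro m hm
      have h1 := hT7 m
      have h2 : (14 * ((M:ℤ) + 1)) ≤ (srN m : ℤ) := by
        have h3 : 14 * (M + 1) ≤ srN m := by
          have h4 := srN_ge m
          omega
        exact_mod_cast h3
      linarith
    have hpin : ∀ m : ℕ, n ≤ m → ∀ s : ℤ, ∀ x ∈ E, ∀ y ∈ E,
        (F x + g m x) % (srN m : ℤ) = s → (F y + g m y) % (srN m : ℤ) = s →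
        F x + g m x = F y + g m y := by
      intro m hm s x hx y hy hxs hys
      have hdvd : (srN m : ℤ) ∣ (F y + g m y) - (F x + g m x) :=
        Int.ModEq.dvd (hxs.trans hys.symm : Int.ModEq _ _ _)
      rw [hE, Set.mem_setOf_eq] at hx hy
      have hbx := abs_le.1 hx
      have hby := abs_le.1 hy
      have hgx1 := hg_nonneg m x
      have hgx2 := hg_le m x
      have hgy1 := hg_nonneg m y
      have hgy2 := hg_le m y
      have hB := hbig m hm
      have hz := int_eq_zero_of_dvd_of_abs_lt hdvd
        (by rw [abs_lt]; constructor <;> linarith)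
      linarith
    have hG0 : μ ({x | (F x + g n x) % (srN n : ℤ) = s₀})ᶜ = 0 :=
      (prob_compl_eq_zero_iff (hVmeas n _ s₀)).2 hs₀
    have hG1 : μ ({x | (F x + g (n+1) x) % (srN (n+1) : ℤ) = s₁})ᶜ = 0 :=
      (prob_compl_eq_zero_iff (hVmeas (n+1) _ s₁)).2 hs₁
    set Good : Set X := E ∩ ({x | (F x + g n x) % (srN n : ℤ) = s₀} ∩
        {x | (F x + g (n+1) x) % (srN (n+1) : ℤ) = s₁}) with hGood
    have hGoodc : μ Goodᶜ < ε := by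
      rw [hGood, Set.compl_inter]
      calc μ (Eᶜ ∪ _) ≤ μ Eᶜ + μ _ := measure_union_le _ _
        _ = μ Eᶜ + 0 := by
            rw [Set.compl_inter]
            exact congrArg _ (le_antisymm
              (le_trans (measure_union_le _ _) (by rw [hG0, hG1, add_zero])) zero_le)
        _ < ε := by rw [add_zero]; exact hEc
    have hGoodne : Good.Nonempty := by
      rcases Set.eq_empty_or_nonempty Good with hGe | hGe
      · exfalso
        have h1 : μ Goodᶜ = 1 := by rw [hGe]; simp
        rw [h1] at hGoodc
        exact absurd hGoodc (not_lt.2 (le_of_lt hεlt1))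
      · exact hGe
    obtain ⟨x₀, hx₀⟩ := hGoodne
    have hval : ∀ x ∈ Good, (srN n : ℤ) * χ n x = (srN n : ℤ) * χ n x₀ := by
      intro x hx
      obtain ⟨hxE, hx0, hx1⟩ := hx
      obtain ⟨hx₀E, hx₀0, hx₀1⟩ := hx₀
      have h1 : F x + g n x = F x₀ + g n x₀ := hpin n le_rfl s₀ x hxE x₀ hx₀E hx0 hx₀0
      have h2 : F x + g (n+1) x = F x₀ + g (n+1) x₀ :=
        hpin (n+1) (by omega) s₁ x hxE x₀ hx₀E hx1 hx₀1
      have e1 : ∀ y : X, g (n+1) y = g n y + (srN n : ℤ) * χ n y := by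
        intro y
        simp [hgdef, Finset.sum_range_succ]
      rw [e1, e1] at h2
      linarith
    have hsn0 : (srN n : ℤ) ≠ 0 := ne_of_gt hq0pos
    by_cases hmem : x₀ ∈ B n
    · have hsubB : Good ⊆ B n := by
        intro x hx
        have hv := hval x hx
        by_contra hxB
        simp only [hχdef, Set.indicator_of_notMem hxB, Set.indicator_of_mem hmem,
          mul_zero, mul_one] at hv
        exact hsn0 hv.symm
      have hlt : μ (B n)ᶜ < ε :=
        lt_of_le_of_lt (measure_mono (Set.compl_subset_compl.2 hsubB)) hGoodc
      exact absurd hlt (not_lt.2 (le_of_lt (hBub n).2))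
    · have hsubB : Good ⊆ (B n)ᶜ := by
        intro x hx
        have hv := hval x hx
        by_contra hxB
        have hxB' : x ∈ B n := Set.notMem_compl_iff.1 hxB
        simp only [hχdef, Set.indicator_of_mem hxB', Set.indicator_of_notMem hmem,
          mul_zero, mul_one] at hv
        exact hsn0 hv
      have hlt : μ (B n) < ε := by
        have h1 : B n ⊆ Goodᶜ := by
          intro x hx hxG
          exact (hsubB hxG) hx
        exact lt_of_le_of_lt (measure_mono h1) hGoodc
      exact absurd hlt (not_lt.2 (le_of_lt (hBub n).1))
  · -- CASE 2 : the homomorphism is nontrivial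
    have hdZpos : (0:ℤ) < |d₀| := abs_pos.2 hdz
    set dZ : ℤ := |d₀| with hdZ
    have hdvd' : ∀ γ : Γ, dZ ∣ hh γ := fun γ => (abs_dvd d₀ (hh γ)).2 (hdvd_all γ)
    obtain ⟨γ₁, hγ₁⟩ : ∃ γ : Γ, hh γ = dZ := by
      obtain ⟨γ₀, h0⟩ := hd₀mem
      rcases abs_choice d₀ with hab | hab
      · exact ⟨γ₀, by rw [h0, hdZ, hab]⟩
      · exact ⟨γ₀⁻¹, by rw [hh_inv, h0, hdZ, hab]⟩
    obtain ⟨M, hM⟩ := hMex (min ε 8⁻¹) (lt_min hε (ENNReal.inv_pos.2 (by norm_num)))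
    set E : Set X := {x | |F x| ≤ (M:ℤ)} with hE
    have hEc : μ Eᶜ ≤ 8⁻¹ := by
      have hrw : Eᶜ = {x | (M:ℤ) < |F x|} := by
        ext x
        simp [hE, not_le]
      rw [hrw]
      exact le_trans (le_of_lt hM) (min_le_right _ _)
    set dN : ℕ := dZ.toNat with hdN
    have hdNZ : (dN:ℤ) = dZ := Int.toNat_of_nonneg (le_of_lt hdZpos)
    have hdNpos : 0 < dN := by
      have h1 : (0:ℤ) < (dN:ℤ) := by rw [hdNZ]; exact hdZpos
      exact_mod_cast h1
    set n : ℕ := max dN (14*(M+1)) with hn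
    set q : ℤ := (srN n : ℤ) with hq
    have hqpos : (0:ℤ) < q := by rw [hq]; exact_mod_cast srN_pos n
    have hdvdq : dN * 4 ∣ srN n :=
      mul_dvd_mul (Nat.dvd_factorial hdNpos (by omega)) (dvd_pow_self 4 (Nat.succ_ne_zero n))
    set cN : ℕ := srN n / (dN * 4) with hcN
    have hcNq : (dN * 4) * cN = srN n := Nat.mul_div_cancel' hdvdq
    have hcNpos : 0 < cN := by
      have h1 := srN_pos n
      rcases Nat.eq_zero_or_pos cN with h | h
      · rw [h, Nat.mul_zero] at hcNq
        omega
      · exact h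
    have hqfact : q = 4 * (cN:ℤ) * dZ := by
      rw [hq, ← hcNq]
      push_cast
      rw [hdNZ]
      ring
    set H : X → ℤ := fun x => F x + g n x with hH
    set T : ℤ := ∑ m ∈ Finset.range n, (srN m : ℤ) with hT
    have hTq : 7 * T ≤ q := hT7 n
    have hTnn : 0 ≤ T := hT0 n
    have hq14 : (14 * ((M:ℤ)+1)) ≤ q := by
      have h3 : 14 * (M+1) ≤ srN n := le_trans (by omega) (srN_ge n)
      rw [hq]
      exact_mod_cast h3
    have hMT : (M:ℤ) + T < (cN:ℤ) * dZ := by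
      have h4 : 4*((M:ℤ) + T) < q := by linarith
      rw [hqfact] at h4
      nlinarith
    -- coset concentration
    have hWinv : ∀ r : ℤ, ∀ γ : Γ,
        μ (symmDiff (a γ ⁻¹' {x | H x % dZ = r}) {x | H x % dZ = r}) = 0 := by
      intro r γ
      have hgood := claimA γ n
      rw [ae_iff] at hgood
      refine measure_mono_null ?_ hgood
      intro x hx
      simp only [Set.mem_symmDiff, Set.mem_preimage, Set.mem_setOf_eq] at hx
      simp only [Set.mem_setOf_eq]
      intro hdvd
      have hdZq : dZ ∣ q := by rw [hqfact]; exact dvd_mul_left dZ _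
      have h1 : dZ ∣ H (a γ x) - H x := by
        have h2 : dZ ∣ H (a γ x) - H x - hh γ := dvd_trans hdZq hdvd
        have h3 := hdvd' γ
        have h4 : H (a γ x) - H x = (H (a γ x) - H x - hh γ) + hh γ := by ring
        rw [h4]
        exact dvd_add h2 h3
      have hmod : H (a γ x) % dZ = H x % dZ :=
        (Int.modEq_iff_dvd.2 h1 : Int.ModEq dZ _ _).symm
      rcases hx with ⟨ha1, ha2⟩ | ⟨ha1, ha2⟩
      · exact ha2 (hmod.symm.trans ha1)
      · exact ha2 (hmod.trans ha1)
    obtain ⟨r₀, hr₀mem, hr₀⟩ : ∃ r₀ ∈ Finset.Ico (0:ℤ) dZ, μ {x | H x % dZ = r₀} = 1 := by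
      by_contra hno
      push_neg at hno
      have hzero : ∀ r ∈ Finset.Ico (0:ℤ) dZ, μ {x | H x % dZ = r} = 0 := by
        intro r hr
        rcases zeroone _ (hVmeas n dZ r) (hWinv r) with h | h
        · exact h
        · exact absurd ((prob_compl_eq_zero_iff (hVmeas n dZ r)).1 h) (hno r hr)
      have hcover : (Set.univ : Set X) ⊆ ⋃ r ∈ Finset.Ico (0:ℤ) dZ, {x | H x % dZ = r} := by
        intro x _
        have hmem : H x % dZ ∈ Finset.Ico (0:ℤ) dZ :=
          Finset.mem_Ico.2 ⟨Int.emod_nonneg _ (ne_of_gt hdZpos), Int.emod_lt_of_pos _ hdZpos⟩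
        exact Set.mem_biUnion hmem rfl
      have hle : (1:ℝ≥0∞) ≤ 0 := by
        calc (1:ℝ≥0∞) = μ Set.univ := measure_univ.symm
          _ ≤ μ (⋃ r ∈ Finset.Ico (0:ℤ) dZ, {x | H x % dZ = r}) := measure_mono hcover
          _ ≤ ∑ r ∈ Finset.Ico (0:ℤ) dZ, μ {x | H x % dZ = r} := measure_biUnion_finset_le _ _
          _ = 0 := Finset.sum_eq_zero hzero
      simp at hle
    have hr₀b : 0 ≤ r₀ ∧ r₀ < dZ := Finset.mem_Ico.1 hr₀mem
    set V : ℕ → Set X := fun j => {x | H x % q = (r₀ + (j:ℤ) * dZ) % q} with hV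
    have hVm : ∀ j, MeasurableSet (V j) := fun j => hVmeas n q _
    -- translation invariance of the distribution
    have htrans : ∀ s : ℤ, μ {x | H x % q = (s + dZ) % q} = μ {x | H x % q = s % q} := by
      intro s
      have hmeas1 : MeasurableSet {x | H x % q = (s + dZ) % q} := hVmeas n q _
      have hpre : μ (a γ₁ ⁻¹' {x | H x % q = (s + dZ) % q})
          = μ {x | H x % q = (s + dZ) % q} :=
        (hmp γ₁).measure_preimage hmeas1.nullMeasurableSet
      have hae : (a γ₁ ⁻¹' {x | H x % q = (s + dZ) % q}) =ᵐ[μ] {x | H x % q = s % q} := by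
        have hgood := claimA γ₁ n
        rw [Filter.eventuallyEq_set]
        filter_upwards [hgood] with x hx
        rw [hγ₁] at hx
        simp only [Set.mem_preimage, Set.mem_setOf_eq]
        have hmodeq : H (a γ₁ x) % q = (H x + dZ) % q := by
          have h1 : q ∣ (H (a γ₁ x)) - (H x + dZ) := by
            have h2 : H (a γ₁ x) - (H x + dZ) = H (a γ₁ x) - H x - dZ := by ring
            rw [h2]
            exact hx
          exact ((Int.modEq_iff_dvd.2 h1 : Int.ModEq q _ _)).symm
        constructor
        · intro h1
          rw [hmodeq] at h1
          exact Int.ModEq.add_right_cancel' dZ (h1 : Int.ModEq q _ _)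
        · intro h1
          rw [hmodeq]
          exact Int.ModEq.add_right dZ h1
      rw [← hpre]
      exact measure_congr hae
    have hVeq : ∀ j : ℕ, μ (V j) = μ (V 0) := by
      intro j
      induction j with
      | zero => rfl
      | succ j ih =>
        have h1 : μ (V (j+1)) = μ (V j) := by
          have harg : (r₀ + ((j:ℤ)+1) * dZ) = (r₀ + (j:ℤ)*dZ) + dZ := by ring
          simp only [hV]
          push_cast
          rw [harg]
          exact htrans (r₀ + (j:ℤ)*dZ)
        rw [h1, ih]
    have hVdisj : ∀ i j : ℕ, i < 4*cN → j < 4*cN → i ≠ j → Disjoint (V i) (V j) := by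
      intro i j hi hj hij
      rw [Set.disjoint_left]
      intro x hxi hxj
      simp only [hV, Set.mem_setOf_eq] at hxi hxj
      have heq : (r₀ + (i:ℤ)*dZ) % q = (r₀ + (j:ℤ)*dZ) % q := by rw [← hxi, ← hxj]
      have hdvd : q ∣ ((j:ℤ) - i) * dZ := by
        have h1 := Int.ModEq.dvd (heq : Int.ModEq q _ _)
        have h2 : (r₀ + (j:ℤ)*dZ) - (r₀ + (i:ℤ)*dZ) = ((j:ℤ) - i)*dZ := by ring
        rwa [h2] at h1
      have habs : |((j:ℤ) - i) * dZ| < q := by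
        rw [abs_mul, abs_of_pos hdZpos, hqfact]
        have h3 : |(j:ℤ) - i| < 4*(cN:ℤ) := by
          rw [abs_sub_lt_iff]
          constructor
          · have h4 : (j:ℤ) < 4*(cN:ℤ) := by exact_mod_cast hj
            have h5 : (0:ℤ) ≤ (i:ℤ) := by positivity
            linarith
          · have h4 : (i:ℤ) < 4*(cN:ℤ) := by exact_mod_cast hi
            have h5 : (0:ℤ) ≤ (j:ℤ) := by positivity
            linarith
        nlinarith
      have hz := int_eq_zero_of_dvd_of_abs_lt hdvd habs
      have h6 : (j:ℤ) = i := by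
        rcases mul_eq_zero.1 hz with h | h
        · linarith
        · exact absurd h (ne_of_gt hdZpos)
      exact hij (by exact_mod_cast h6.symm)
    have hWsub : {x | H x % dZ = r₀} ⊆ ⋃ j ∈ Finset.range (4*cN), V j := by
      intro x hx
      simp only [Set.mem_setOf_eq] at hx
      set s : ℤ := H x % q with hs
      have hs0 : 0 ≤ s := Int.emod_nonneg _ (ne_of_gt hqpos)
      have hsq : s < q := Int.emod_lt_of_pos _ hqpos
      have hsr : s % dZ = r₀ := by
        rw [hs, Int.emod_emod_of_dvd _ (by rw [hqfact]; exact dvd_mul_left dZ _)]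
        exact hx
      have hdvdsr : dZ ∣ s - r₀ := by
        have h1 : s % dZ = r₀ % dZ := by
          rw [hsr]
          exact (Int.emod_eq_of_lt hr₀b.1 hr₀b.2).symm
        have h2 := Int.ModEq.dvd (h1 : Int.ModEq dZ s r₀)
        have h3 := dvd_neg.2 h2
        rwa [neg_sub] at h3
      obtain ⟨k, hk⟩ := hdvdsr
      have hk0 : 0 ≤ k := by
        by_contra hkneg
        push_neg at hkneg
        have h1 : k ≤ -1 := by omega
        have h2 : dZ * k ≤ dZ * (-1) := mul_le_mul_of_nonneg_left h1 (le_of_lt hdZpos)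
        rw [← hk] at h2
        linarith [hr₀b.2, hs0]
      have hklt : k < 4*(cN:ℤ) := by
        by_contra hkge
        push_neg at hkge
        have h2 : dZ * (4*(cN:ℤ)) ≤ dZ * k := mul_le_mul_of_nonneg_left hkge (le_of_lt hdZpos)
        rw [← hk] at h2
        have h3 : dZ * (4*(cN:ℤ)) = q := by rw [hqfact]; ring
        linarith [hr₀b.1, hsq]
      have hmemV : x ∈ V k.toNat := by
        simp only [hV, Set.mem_setOf_eq]
        have h5 : r₀ + (k.toNat : ℤ) * dZ = s := by
          rw [Int.toNat_of_nonneg hk0]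
          linarith [hk]
        rw [h5, hs]
        exact (Int.emod_emod_of_dvd _ dvd_rfl).symm
      have hmemR : k.toNat ∈ Finset.range (4*cN) := Finset.mem_range.2 (by omega)
      exact Set.mem_biUnion hmemR hmemV
    have hsum1 : μ (⋃ j ∈ Finset.range (4*cN), V j) = ∑ j ∈ Finset.range (4*cN), μ (V j) := by
      refine measure_biUnion_finset ?_ (fun j _ => hVm j)
      intro i hi j hj hij
      exact hVdisj i j (Finset.mem_range.1 (Finset.mem_coe.1 hi))
        (Finset.mem_range.1 (Finset.mem_coe.1 hj)) hij
    have hone' : μ (⋃ j ∈ Finset.range (4*cN), V j) = 1 := by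
      refine le_antisymm prob_le_one ?_
      calc (1:ℝ≥0∞) = μ {x | H x % dZ = r₀} := hr₀.symm
        _ ≤ μ (⋃ j ∈ Finset.range (4*cN), V j) := measure_mono hWsub
    have htot : ((4*cN : ℕ) : ℝ≥0∞) * μ (V 0) = 1 := by
      rw [← hone', hsum1, Finset.sum_congr rfl fun j _ => hVeq j, Finset.sum_const,
        Finset.card_range, nsmul_eq_mul]
    have hmid : ∀ j : ℕ, cN ≤ j → j < 3*cN → V j ⊆ Eᶜ := by
      intro j hj1 hj2 x hxV
      simp only [hV, Set.mem_setOf_eq] at hxV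
      rw [Set.mem_compl_iff]
      intro hxE
      rw [hE, Set.mem_setOf_eq] at hxE
      have hFb := abs_le.1 hxE
      have hgb1 := hg_nonneg n x
      have hgb2 : g n x ≤ T := hg_le n x
      have hjZ1 : (cN:ℤ) ≤ (j:ℤ) := by exact_mod_cast hj1
      have hjZ2 : (j:ℤ) ≤ 3*(cN:ℤ) - 1 := by
        have h4 : (j:ℤ) < 3*(cN:ℤ) := by exact_mod_cast hj2
        omega
      have hargb : 0 ≤ r₀ + (j:ℤ)*dZ := by nlinarith [hr₀b.1, hdZpos]
      have hargu : r₀ + (j:ℤ)*dZ < q := by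
        rw [hqfact]
        nlinarith [hr₀b.2, hdZpos]
      rw [Int.emod_eq_of_lt hargb hargu] at hxV
      have hlow : (cN:ℤ)*dZ ≤ r₀ + (j:ℤ)*dZ := by nlinarith [hr₀b.1, hdZpos]
      have hupp : r₀ + (j:ℤ)*dZ < 3*((cN:ℤ)*dZ) := by nlinarith [hr₀b.2, hdZpos]
      have hHx : H x = F x + g n x := rfl
      rcases le_or_gt 0 (H x) with hpos | hneg
      · have hHub : H x ≤ (M:ℤ) + T := by rw [hHx]; linarith
        have hHq : H x < q := by
          have h7 : (cN:ℤ)*dZ ≤ q := by rw [hqfact]; nlinarith [hdZpos]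
          linarith [hMT]
        rw [Int.emod_eq_of_lt hpos hHq] at hxV
        linarith [hMT, hlow]
      · have hHlb : -(M:ℤ) ≤ H x := by rw [hHx]; linarith
        have h0q : 0 ≤ H x + q := by
          have h8 : (M:ℤ) ≤ q := by linarith [hq14]
          linarith
        have hq2 : H x + q < q := by linarith
        have hmodneg : H x % q = H x + q := by
          have h6 : (H x + q) % q = H x % q := by
            have h7 := Int.add_mul_emod_self_left (a := H x) (b := q) (c := 1)
            rwa [mul_one] at h7
          rw [← h6]
          exact Int.emod_eq_of_lt h0q hq2
        rw [hmodneg] at hxV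
        have hMle : (M:ℤ) ≤ (cN:ℤ)*dZ := by linarith [hMT, hTnn]
        have hq4 : q = 4*((cN:ℤ)*dZ) := by rw [hqfact]; ring
        linarith [hupp]
    have hsum2 : μ (⋃ j ∈ Finset.Ico cN (3*cN), V j)
        = ∑ j ∈ Finset.Ico cN (3*cN), μ (V j) := by
      refine measure_biUnion_finset ?_ (fun j _ => hVm j)
      intro i hi j hj hij
      have hi' := Finset.mem_Ico.1 (Finset.mem_coe.1 hi)
      have hj' := Finset.mem_Ico.1 (Finset.mem_coe.1 hj)
      exact hVdisj i j (by omega) (by omega) hij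
    have hmide : ((2*cN : ℕ) : ℝ≥0∞) * μ (V 0) ≤ 8⁻¹ := by
      have h1 : ∑ j ∈ Finset.Ico cN (3*cN), μ (V j) = ((2*cN:ℕ) : ℝ≥0∞) * μ (V 0) := by
        rw [Finset.sum_congr rfl fun j _ => hVeq j, Finset.sum_const, Nat.card_Ico,
          nsmul_eq_mul]
        congr 2
        omega
      rw [← h1, ← hsum2]
      refine le_trans (measure_mono ?_) hEc
      refine Set.iUnion₂_subset ?_
      intro j hj
      have hj' := Finset.mem_Ico.1 hj
      exact hmid j hj'.1 hj'.2
    have hcontr : (1:ℝ≥0∞) ≤ 4⁻¹ := by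
      have h2 : ((4*cN : ℕ) : ℝ≥0∞) * μ (V 0)
          = ((2*cN : ℕ) : ℝ≥0∞) * μ (V 0) + ((2*cN : ℕ) : ℝ≥0∞) * μ (V 0) := by
        rw [← add_mul]
        congr 1
        push_cast
        ring
      calc (1:ℝ≥0∞) = ((4*cN : ℕ) : ℝ≥0∞) * μ (V 0) := htot.symm
        _ = ((2*cN : ℕ) : ℝ≥0∞) * μ (V 0) + ((2*cN : ℕ) : ℝ≥0∞) * μ (V 0) := h2
        _ ≤ 8⁻¹ + 8⁻¹ := add_le_add hmide hmide
        _ = 4⁻¹ := by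
            rw [← two_mul, show (8:ℝ≥0∞) = 2*4 by norm_num,
              ENNReal.mul_inv (Or.inl two_ne_zero) (Or.inl ENNReal.ofNat_ne_top),
              ← mul_assoc, ENNReal.mul_inv_cancel two_ne_zero ENNReal.ofNat_ne_top, one_mul]
    have hlt1 : (4:ℝ≥0∞)⁻¹ < 1 := ENNReal.inv_lt_one.2 (by norm_num)
    exact absurd hcontr (not_le.2 hlt1)

end OEW
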